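/- Let Φ̄_ℓ : (0,∞)^{2(L−1)} → ℝ (ℓ = 1,…,L) be differentiable functions of the IT-level vectors, and suppose for some pair (ℓ, j) the 2×2 Jacobian matrix D_{ℓ,j} = [[∂Φ̄_ℓ/∂Γ_{ℓ,j}, ∂Φ̄_ℓ/∂Γ_{j,ℓ}], [∂Φ̄_j/∂Γ_{ℓ,j}, ∂Φ̄_j/∂Γ_{j,ℓ}]] satisfies det(D_{ℓ,j}) ≠ 0. Then there exists a direction d ∈ ℝ² with D_{ℓ,j}·d < 0 componentwise, and hence for sufficiently small δ > 0 the update (Γ_{ℓ,j}, Γ_{j,ℓ}) + δ·d strictly decreases both Φ̄_ℓ and Φ̄_j to first order. Consequently, at any IT-level vector whose induced MSE tuple is Pareto optimal (assuming MSEs in other cells are non-increasing under the update), det(D_{ℓ,j}) = 0 for every pair ℓ ≠ j. -/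

import Mathlib

theorem stmt14 (f g : ℝ × ℝ → ℝ) (x : ℝ × ℝ)
    (f' g' : ℝ × ℝ →L[ℝ] ℝ)
    (hf : HasFDerivAt f f' x) (hg : HasFDerivAt g g' x)
    (a b c d : ℝ)
    (ha : a = f' (1, 0)) (hb : b = f' (0, 1))
    (hc : c = g' (1, 0)) (hd : d = g' (0, 1)) :
    (a * d - b * c ≠ 0 → ∃ v : ℝ × ℝ, f' v < 0 ∧ g' v < 0) ∧
    ((¬ ∃ y : ℝ × ℝ, f y ≤ f x ∧ g y ≤ g x ∧ (f y < f x ∨ g y < g x)) →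
      a * d - b * c = 0) := by
  have key : ∀ (L : ℝ × ℝ →L[ℝ] ℝ) (p q : ℝ), L (p, q) = p * L (1, 0) + q * L (0, 1) := by
    intro L p q
    have h : (p, q) = p • ((1:ℝ), (0:ℝ)) + q • ((0:ℝ), (1:ℝ)) := by
      simp [Prod.ext_iff]
    rw [h, map_add, map_smul, map_smul, smul_eq_mul, smul_eq_mul]
  have part1 : a * d - b * c ≠ 0 → ∃ v : ℝ × ℝ, f' v < 0 ∧ g' v < 0 := by
    intro hdet
    refine ⟨((-d + b) / (a * d - b * c), (c - a) / (a * d - b * c)), ?_, ?_⟩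
    · rw [key, ← ha, ← hb]
      have h : (-d + b) / (a * d - b * c) * a + (c - a) / (a * d - b * c) * b = -1 := by
        rw [div_mul_eq_mul_div, div_mul_eq_mul_div, ← add_div, div_eq_iff hdet]
        ring
      rw [h]; norm_num
    · rw [key, ← hc, ← hd]
      have h : (-d + b) / (a * d - b * c) * c + (c - a) / (a * d - b * c) * d = -1 := by
        rw [div_mul_eq_mul_div, div_mul_eq_mul_div, ← add_div, div_eq_iff hdet]
        ring
      rw [h]; norm_num
  refine ⟨part1, ?_⟩
  intro hpar
  by_contra hdet
  obtain ⟨v, hfv, hgv⟩ := part1 hdet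
  have hline : HasDerivAt (fun t : ℝ => x + t • v) v 0 := by
    simpa using ((hasDerivAt_id (0:ℝ)).smul_const v).const_add x
  have hx0 : x + (0:ℝ) • v = x := by simp
  have hfx : HasFDerivAt f f' (x + (0:ℝ) • v) := by rw [hx0]; exact hf
  have hgx : HasFDerivAt g g' (x + (0:ℝ) • v) := by rw [hx0]; exact hg
  have hφf : HasDerivAt (fun t : ℝ => f (x + t • v)) (f' v) 0 := by
    have := hfx.comp_hasDerivAt 0 hline
    exact this
  have hφg : HasDerivAt (fun t : ℝ => g (x + t • v)) (g' v) 0 := by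
    have := hgx.comp_hasDerivAt 0 hline
    exact this
  rw [hasDerivAt_iff_tendsto_slope] at hφf hφg
  have hf' : ∀ᶠ t in nhdsWithin (0:ℝ) {(0:ℝ)}ᶜ,
      slope (fun t : ℝ => f (x + t • v)) 0 t < 0 := hφf.eventually_lt_const hfv
  have hg' : ∀ᶠ t in nhdsWithin (0:ℝ) {(0:ℝ)}ᶜ,
      slope (fun t : ℝ => g (x + t • v)) 0 t < 0 := hφg.eventually_lt_const hgv
  have hle : nhdsWithin (0:ℝ) (Set.Ioi 0) ≤ nhdsWithin (0:ℝ) {(0:ℝ)}ᶜ :=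
    nhdsWithin_mono _ (fun t ht => ne_of_gt ht)
  have hmem : ∀ᶠ t in nhdsWithin (0:ℝ) (Set.Ioi 0), t ∈ Set.Ioi (0:ℝ) :=
    eventually_mem_nhdsWithin
  obtain ⟨t, hfs, hgs, ht⟩ := ((hf'.filter_mono hle).and ((hg'.filter_mono hle).and hmem)).exists
  have htpos : (0:ℝ) < t := ht
  have hfy : f (x + t • v) < f x := by
    have h := hfs
    rw [slope_def_field] at h
    have hnum : f (x + t • v) - f (x + (0:ℝ) • v) < 0 := by
      by_contra hge
      push_neg at hge
      have : (0:ℝ) ≤ (f (x + t • v) - f (x + (0:ℝ) • v)) / (t - 0) :=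
        div_nonneg (by linarith) (by linarith)
      linarith
    rw [hx0] at hnum
    linarith
  have hgy : g (x + t • v) < g x := by
    have h := hgs
    rw [slope_def_field] at h
    have hnum : g (x + t • v) - g (x + (0:ℝ) • v) < 0 := by
      by_contra hge
      push_neg at hge
      have : (0:ℝ) ≤ (g (x + t • v) - g (x + (0:ℝ) • v)) / (t - 0) :=
        div_nonneg (by linarith) (by linarith)
      linarith
    rw [hx0] at hnum
    linarith
  exact hpar ⟨x + t • v, le_of_lt hfy, le_of_lt hgy, Or.inl hfy⟩
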